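/- Let ν be a strongly mixing shift-invariant measure on Ω = ℝ^ℤ with mixing coefficients α(n), and let (μ_ω) be an equivariant measurable kernel to probabilities on Z = (0,1)^ℤ such that for every set A measurable with respect to coordinates ≤ 0 of Z, the function ω ↦ μ_ω(A) is measurable with respect to coordinates ≤ 0 of Ω, and similarly for coordinates ≥ n. Then the mixture measure μ satisfies |μ(A ∩ B) − μ(A)μ(B)| ≤ 4α(n) for all A measurable w.r.t. coordinates ≤ 0 and B measurable w.r.t. coordinates ≥ n. -/

import Mathlib

open MeasureTheory

/-- The σ-algebra on a product space `ℤ → α` generated by the coordinates `≤ 0`. -/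
def pastCoords (α : Type*) [MeasurableSpace α] : MeasurableSpace (ℤ → α) :=
  MeasurableSpace.comap (fun ω => (fun i : {i : ℤ // i ≤ 0} => ω i)) inferInstance

/-- The σ-algebra on a product space `ℤ → α` generated by the coordinates `≥ n`. -/
def futureCoords (α : Type*) [MeasurableSpace α] (n : ℕ) : MeasurableSpace (ℤ → α) :=
  MeasurableSpace.comap (fun ω => (fun i : {i : ℤ // (n : ℤ) ≤ i} => ω i)) inferInstance

open Finset


lemma floor_sum_aux (N : ℕ) (hN : 1 ≤ N) (x : ℝ) (hx0 : 0 ≤ x) (hx1 : x ≤ 1) :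
    (∑ k ∈ Finset.Icc 1 N, if ((k : ℝ) / N ≤ x) then (1 : ℝ) else 0)
      = (⌊(N : ℝ) * x⌋₊ : ℝ) := by
  have hNpos : (0 : ℝ) < N := by exact_mod_cast hN
  have hxN : (0 : ℝ) ≤ (N : ℝ) * x := mul_nonneg hNpos.le hx0
  have hfloor_le : ⌊(N : ℝ) * x⌋₊ ≤ N := by
    have h1 : (N : ℝ) * x ≤ N := by nlinarith
    calc ⌊(N : ℝ) * x⌋₊ ≤ ⌊(N : ℝ)⌋₊ := Nat.floor_le_floor h1
      _ = N := Nat.floor_natCast N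
  rw [Finset.sum_boole]
  have hfilter : (Finset.Icc 1 N).filter (fun k : ℕ => ((k : ℝ) / N ≤ x))
      = Finset.Icc 1 ⌊(N : ℝ) * x⌋₊ := by
    ext k
    simp only [Finset.mem_filter, Finset.mem_Icc]
    constructor
    · rintro ⟨⟨h1, _⟩, h3⟩
      refine ⟨h1, ?_⟩
      rw [Nat.le_floor_iff hxN]
      rw [div_le_iff₀ hNpos] at h3
      linarith
    · rintro ⟨h1, h2⟩
      have h3 : (k : ℝ) ≤ (N : ℝ) * x := (Nat.le_floor_iff hxN).mp h2
      exact ⟨⟨h1, le_trans h2 hfloor_le⟩, by rw [div_le_iff₀ hNpos]; linarith⟩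
  rw [hfilter, Nat.card_Icc]
  simp

/-- Covariance inequality for `[0,1]`-valued functions under a mixing bound on
level-set covariances. -/
lemma cov_bound {Ω : Type*} [MeasurableSpace Ω] (ν : Measure Ω)
    [IsProbabilityMeasure ν] {a : ℝ} {f g : Ω → ℝ}
    (hfm : Measurable f) (hgm : Measurable g)
    (hcov : ∀ c d : ℝ,
      |(ν (f ⁻¹' Set.Ici c ∩ g ⁻¹' Set.Ici d)).toReal
        - (ν (f ⁻¹' Set.Ici c)).toReal * (ν (g ⁻¹' Set.Ici d)).toReal| ≤ a)
    (hf0 : ∀ ω, 0 ≤ f ω) (hf1 : ∀ ω, f ω ≤ 1)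
    (hg0 : ∀ ω, 0 ≤ g ω) (hg1 : ∀ ω, g ω ≤ 1) :
    |(∫ ω, f ω * g ω ∂ν) - (∫ ω, f ω ∂ν) * (∫ ω, g ω ∂ν)| ≤ a := by
  refine le_of_forall_pos_le_add fun ε hε => ?_
  obtain ⟨N, hNgt⟩ := exists_nat_gt (4 / ε)
  have hNpos' : (0 : ℝ) < N := lt_trans (by positivity) hNgt
  have hN : 1 ≤ N := by exact_mod_cast Nat.one_le_iff_ne_zero.mpr (by
    intro h; rw [h] at hNpos'; simp at hNpos')
  have h4N : 4 / (N : ℝ) < ε := by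
    rw [div_lt_iff₀ hNpos']
    rw [div_lt_iff₀ hε] at hNgt
    linarith
  -- level sets
  set A : ℕ → Set Ω := fun k => f ⁻¹' Set.Ici ((k : ℝ) / N) with hAdef
  set B : ℕ → Set Ω := fun l => g ⁻¹' Set.Ici ((l : ℝ) / N) with hBdef
  have hAm : ∀ k, MeasurableSet (A k) := fun k => hfm measurableSet_Ici
  have hBm : ∀ l, MeasurableSet (B l) := fun l => hgm measurableSet_Ici
  -- discretized functions
  set fN : Ω → ℝ := fun ω => (∑ k ∈ Finset.Icc 1 N, (A k).indicator (1 : Ω → ℝ) ω) / N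
    with hfNdef
  set gN : Ω → ℝ := fun ω => (∑ l ∈ Finset.Icc 1 N, (B l).indicator (1 : Ω → ℝ) ω) / N
    with hgNdef
  have hfNval : ∀ ω, fN ω = (⌊(N : ℝ) * f ω⌋₊ : ℝ) / N := by
    intro ω
    have hs : (∑ k ∈ Finset.Icc 1 N, (A k).indicator (1 : Ω → ℝ) ω)
        = ∑ k ∈ Finset.Icc 1 N, if ((k : ℝ) / N ≤ f ω) then (1 : ℝ) else 0 :=
      Finset.sum_congr rfl fun k _ => by
        by_cases h : (k : ℝ) / N ≤ f ω <;>
          simp [hAdef, Set.indicator_apply, Set.mem_Ici, h]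
    show (∑ k ∈ Finset.Icc 1 N, (A k).indicator (1 : Ω → ℝ) ω) / N = _
    rw [hs, floor_sum_aux N hN (f ω) (hf0 ω) (hf1 ω)]
  have hgNval : ∀ ω, gN ω = (⌊(N : ℝ) * g ω⌋₊ : ℝ) / N := by
    intro ω
    have hs : (∑ l ∈ Finset.Icc 1 N, (B l).indicator (1 : Ω → ℝ) ω)
        = ∑ l ∈ Finset.Icc 1 N, if ((l : ℝ) / N ≤ g ω) then (1 : ℝ) else 0 :=
      Finset.sum_congr rfl fun l _ => by
        by_cases h : (l : ℝ) / N ≤ g ω <;>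
          simp [hBdef, Set.indicator_apply, Set.mem_Ici, h]
    show (∑ l ∈ Finset.Icc 1 N, (B l).indicator (1 : Ω → ℝ) ω) / N = _
    rw [hs, floor_sum_aux N hN (g ω) (hg0 ω) (hg1 ω)]
  -- bounds on fN, gN
  have hfN_props : ∀ ω, 0 ≤ fN ω ∧ fN ω ≤ f ω ∧ f ω - fN ω ≤ 1 / N := by
    intro ω
    rw [hfNval ω]
    have h1 : (⌊(N : ℝ) * f ω⌋₊ : ℝ) ≤ (N : ℝ) * f ω :=
      Nat.floor_le (mul_nonneg hNpos'.le (hf0 ω))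
    have h2 : (N : ℝ) * f ω < ⌊(N : ℝ) * f ω⌋₊ + 1 := Nat.lt_floor_add_one _
    refine ⟨by positivity, ?_, ?_⟩
    · rw [div_le_iff₀ hNpos']; linarith [mul_comm (f ω) (N : ℝ)]
    · rw [sub_le_iff_le_add, ← add_div, le_div_iff₀ hNpos']
      linarith [mul_comm (f ω) (N : ℝ)]
  have hgN_props : ∀ ω, 0 ≤ gN ω ∧ gN ω ≤ g ω ∧ g ω - gN ω ≤ 1 / N := by
    intro ω
    rw [hgNval ω]
    have h1 : (⌊(N : ℝ) * g ω⌋₊ : ℝ) ≤ (N : ℝ) * g ω :=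
      Nat.floor_le (mul_nonneg hNpos'.le (hg0 ω))
    have h2 : (N : ℝ) * g ω < ⌊(N : ℝ) * g ω⌋₊ + 1 := Nat.lt_floor_add_one _
    refine ⟨by positivity, ?_, ?_⟩
    · rw [div_le_iff₀ hNpos']; linarith [mul_comm (g ω) (N : ℝ)]
    · rw [sub_le_iff_le_add, ← add_div, le_div_iff₀ hNpos']
      linarith [mul_comm (g ω) (N : ℝ)]
  -- integrability of indicators
  have hind_int : ∀ (S : Set Ω), MeasurableSet S →
      Integrable ((S.indicator (1 : Ω → ℝ))) ν := fun S hS =>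
    (integrable_const (1 : ℝ)).indicator hS
  -- integrals of fN, gN
  have hint_fN : ∫ ω, fN ω ∂ν = (∑ k ∈ Finset.Icc 1 N, (ν (A k)).toReal) / N := by
    simp only [hfNdef]
    rw [integral_div]
    congr 1
    rw [integral_finset_sum _ (fun k _ => hind_int _ (hAm k))]
    exact Finset.sum_congr rfl fun k _ => integral_indicator_one (hAm k)
  have hint_gN : ∫ ω, gN ω ∂ν = (∑ l ∈ Finset.Icc 1 N, (ν (B l)).toReal) / N := by
    simp only [hgNdef]
    rw [integral_div]
    congr 1
    rw [integral_finset_sum _ (fun l _ => hind_int _ (hBm l))]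
    exact Finset.sum_congr rfl fun l _ => integral_indicator_one (hBm l)
  -- product
  have hprod : ∀ ω, fN ω * gN ω =
      (∑ k ∈ Finset.Icc 1 N, ∑ l ∈ Finset.Icc 1 N,
        ((A k ∩ B l).indicator (1 : Ω → ℝ) ω)) / ((N : ℝ) * N) := by
    intro ω
    show ((∑ k ∈ Finset.Icc 1 N, (A k).indicator (1 : Ω → ℝ) ω) / N)
        * ((∑ l ∈ Finset.Icc 1 N, (B l).indicator (1 : Ω → ℝ) ω) / N) = _
    rw [div_mul_div_comm, Finset.sum_mul_sum]
    congr 1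
    refine Finset.sum_congr rfl fun k _ => Finset.sum_congr rfl fun l _ => ?_
    rw [Set.inter_indicator_one]
    rfl
  have hint_prod : ∫ ω, fN ω * gN ω ∂ν =
      (∑ k ∈ Finset.Icc 1 N, ∑ l ∈ Finset.Icc 1 N, (ν (A k ∩ B l)).toReal)
        / ((N : ℝ) * N) := by
    rw [integral_congr_ae (Filter.Eventually.of_forall hprod), integral_div]
    congr 1
    rw [integral_finset_sum _ (fun k _ => integrable_finset_sum _
      (fun l _ => hind_int _ ((hAm k).inter (hBm l))))]
    refine Finset.sum_congr rfl fun k _ => ?_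
    rw [integral_finset_sum _ (fun l _ => hind_int _ ((hAm k).inter (hBm l)))]
    exact Finset.sum_congr rfl fun l _ => integral_indicator_one ((hAm k).inter (hBm l))
  -- key covariance bound for discretizations
  have hkey : |(∫ ω, fN ω * gN ω ∂ν) - (∫ ω, fN ω ∂ν) * (∫ ω, gN ω ∂ν)| ≤ a := by
    rw [hint_prod, hint_fN, hint_gN, div_mul_div_comm, Finset.sum_mul_sum,
      div_sub_div_same]
    simp only [← Finset.sum_sub_distrib]
    rw [abs_div, abs_of_pos (by positivity : (0:ℝ) < (N:ℝ) * N), div_le_iff₀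
      (by positivity : (0:ℝ) < (N:ℝ) * N)]
    calc |∑ k ∈ Finset.Icc 1 N, ∑ l ∈ Finset.Icc 1 N,
          ((ν (A k ∩ B l)).toReal - (ν (A k)).toReal * (ν (B l)).toReal)|
        ≤ ∑ k ∈ Finset.Icc 1 N, ∑ l ∈ Finset.Icc 1 N,
          |(ν (A k ∩ B l)).toReal - (ν (A k)).toReal * (ν (B l)).toReal| := by
          refine (Finset.abs_sum_le_sum_abs _ _).trans ?_
          exact Finset.sum_le_sum fun k _ => Finset.abs_sum_le_sum_abs _ _
      _ ≤ ∑ k ∈ Finset.Icc 1 N, ∑ l ∈ Finset.Icc 1 N, a :=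
          Finset.sum_le_sum fun k _ => Finset.sum_le_sum fun l _ =>
            hcov ((k : ℝ) / N) ((l : ℝ) / N)
      _ = a * ((N : ℝ) * N) := by
          simp [Finset.sum_const, Nat.card_Icc]
          ring
  -- measurability of discretizations
  have hfN_meas : Measurable fN := by
    apply Measurable.div_const
    exact Finset.measurable_sum _ fun k _ => (measurable_const.indicator (hAm k))
  have hgN_meas : Measurable gN := by
    apply Measurable.div_const
    exact Finset.measurable_sum _ fun l _ => (measurable_const.indicator (hBm l))
  -- integrability facts
  have hboundedInt : ∀ (h : Ω → ℝ), Measurable h → (∀ ω, |h ω| ≤ 1) →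
      Integrable h ν := by
    intro h hh hb
    refine (integrable_const (1 : ℝ)).mono' hh.aestronglyMeasurable ?_
    filter_upwards with ω
    rw [Real.norm_eq_abs]; exact hb ω
  have hint_f : Integrable f ν := hboundedInt f hfm fun ω => by
    rw [abs_le]; exact ⟨by linarith [hf0 ω], hf1 ω⟩
  have hint_g : Integrable g ν := hboundedInt g hgm fun ω => by
    rw [abs_le]; exact ⟨by linarith [hg0 ω], hg1 ω⟩
  have hint_fg : Integrable (fun ω => f ω * g ω) ν :=
    hboundedInt _ (hfm.mul hgm) fun ω => by
      rw [abs_le]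
      constructor
      · nlinarith [hf0 ω, hg0 ω]
      · nlinarith [hf0 ω, hf1 ω, hg0 ω, hg1 ω]
  have hint_fNgN : Integrable (fun ω => fN ω * gN ω) ν :=
    hboundedInt _ (hfN_meas.mul hgN_meas) fun ω => by
      obtain ⟨h1, h2, _⟩ := hfN_props ω
      obtain ⟨h3, h4, _⟩ := hgN_props ω
      rw [abs_le]
      constructor
      · nlinarith
      · nlinarith [hf1 ω, hg1 ω]
  have hint_fN' : Integrable fN ν := hboundedInt fN hfN_meas fun ω => by
    obtain ⟨h1, h2, _⟩ := hfN_props ω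
    rw [abs_le]; exact ⟨by linarith, by linarith [hf1 ω]⟩
  have hint_gN' : Integrable gN ν := hboundedInt gN hgN_meas fun ω => by
    obtain ⟨h1, h2, _⟩ := hgN_props ω
    rw [abs_le]; exact ⟨by linarith, by linarith [hg1 ω]⟩
  -- |∫fg - ∫fNgN| ≤ 2/N
  have herr1 : |(∫ ω, f ω * g ω ∂ν) - (∫ ω, fN ω * gN ω ∂ν)| ≤ 2 / N := by
    rw [← integral_sub hint_fg hint_fNgN]
    have := norm_integral_le_of_norm_le_const (μ := ν)
      (f := fun ω => f ω * g ω - fN ω * gN ω) (C := 2 / N)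
      (Filter.Eventually.of_forall fun ω => by
        obtain ⟨h1, h2, h3⟩ := hfN_props ω
        obtain ⟨h4, h5, h6⟩ := hgN_props ω
        show ‖f ω * g ω - fN ω * gN ω‖ ≤ 2 / N
        rw [Real.norm_eq_abs]
        have heq : f ω * g ω - fN ω * gN ω
            = (f ω - fN ω) * g ω + fN ω * (g ω - gN ω) := by ring
        rw [heq]
        have e1 : |(f ω - fN ω) * g ω| ≤ 1 / N := by
          rw [abs_mul, abs_of_nonneg (by linarith : (0:ℝ) ≤ f ω - fN ω),
            abs_of_nonneg (hg0 ω)]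
          nlinarith [hg1 ω, hg0 ω]
        have e2 : |fN ω * (g ω - gN ω)| ≤ 1 / N := by
          rw [abs_mul, abs_of_nonneg h1,
            abs_of_nonneg (by linarith : (0:ℝ) ≤ g ω - gN ω)]
          nlinarith [hf1 ω]
        calc |(f ω - fN ω) * g ω + fN ω * (g ω - gN ω)|
            ≤ |(f ω - fN ω) * g ω| + |fN ω * (g ω - gN ω)| := abs_add_le _ _
          _ ≤ 1 / N + 1 / N := add_le_add e1 e2
          _ = 2 / N := by ring)
    simpa using this
  have hIf : |(∫ ω, f ω ∂ν) - (∫ ω, fN ω ∂ν)| ≤ 1 / N := by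
    rw [← integral_sub hint_f hint_fN']
    have := norm_integral_le_of_norm_le_const (μ := ν) (f := fun ω => f ω - fN ω)
      (C := 1 / N) (Filter.Eventually.of_forall fun ω => by
        obtain ⟨h1, h2, h3⟩ := hfN_props ω
        show ‖f ω - fN ω‖ ≤ 1 / N
        rw [Real.norm_eq_abs, abs_of_nonneg (by linarith : (0:ℝ) ≤ f ω - fN ω)]
        exact h3)
    simpa using this
  have hIg : |(∫ ω, g ω ∂ν) - (∫ ω, gN ω ∂ν)| ≤ 1 / N := by
    rw [← integral_sub hint_g hint_gN']
    have := norm_integral_le_of_norm_le_const (μ := ν) (f := fun ω => g ω - gN ω)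
      (C := 1 / N) (Filter.Eventually.of_forall fun ω => by
        obtain ⟨h1, h2, h3⟩ := hgN_props ω
        show ‖g ω - gN ω‖ ≤ 1 / N
        rw [Real.norm_eq_abs, abs_of_nonneg (by linarith : (0:ℝ) ≤ g ω - gN ω)]
        exact h3)
    simpa using this
  have hIg1 : |∫ ω, g ω ∂ν| ≤ 1 := by
    have := norm_integral_le_of_norm_le_const (μ := ν) (f := g)
      (C := 1) (Filter.Eventually.of_forall fun ω => by
        rw [Real.norm_eq_abs, abs_of_nonneg (hg0 ω)]; exact hg1 ω)
    simpa using this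
  have hIfN1 : |∫ ω, fN ω ∂ν| ≤ 1 := by
    have := norm_integral_le_of_norm_le_const (μ := ν) (f := fN)
      (C := 1) (Filter.Eventually.of_forall fun ω => by
        obtain ⟨h1, h2, _⟩ := hfN_props ω
        rw [Real.norm_eq_abs, abs_of_nonneg h1]; linarith [hf1 ω])
    simpa using this
  have herr2 : |(∫ ω, fN ω ∂ν) * (∫ ω, gN ω ∂ν) - (∫ ω, f ω ∂ν) * (∫ ω, g ω ∂ν)|
      ≤ 2 / N := by
    have heq : (∫ ω, fN ω ∂ν) * (∫ ω, gN ω ∂ν) - (∫ ω, f ω ∂ν) * (∫ ω, g ω ∂ν)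
        = ((∫ ω, fN ω ∂ν) - (∫ ω, f ω ∂ν)) * (∫ ω, g ω ∂ν)
          + (∫ ω, fN ω ∂ν) * ((∫ ω, gN ω ∂ν) - (∫ ω, g ω ∂ν)) := by ring
    rw [heq]
    have key2 : 1 / (N:ℝ) * 1 + 1 * (1 / N) = 2 / N := by ring
    calc |((∫ ω, fN ω ∂ν) - (∫ ω, f ω ∂ν)) * (∫ ω, g ω ∂ν)
          + (∫ ω, fN ω ∂ν) * ((∫ ω, gN ω ∂ν) - (∫ ω, g ω ∂ν))|
        ≤ |((∫ ω, fN ω ∂ν) - (∫ ω, f ω ∂ν)) * (∫ ω, g ω ∂ν)|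
          + |(∫ ω, fN ω ∂ν) * ((∫ ω, gN ω ∂ν) - (∫ ω, g ω ∂ν))| := abs_add_le _ _
      _ ≤ 1 / N * 1 + 1 * (1 / N) := by
          rw [abs_mul, abs_mul]
          refine add_le_add (mul_le_mul ?_ hIg1 (abs_nonneg _) (by positivity))
            (mul_le_mul hIfN1 ?_ (abs_nonneg _) (by norm_num))
          · rw [abs_sub_comm]; exact hIf
          · rw [abs_sub_comm]; exact hIg
      _ = 2 / N := key2
  have hsum : 2 / (N:ℝ) + 2 / (N:ℝ) = 4 / (N:ℝ) := by ring
  calc |(∫ ω, f ω * g ω ∂ν) - (∫ ω, f ω ∂ν) * (∫ ω, g ω ∂ν)|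
      ≤ |(∫ ω, f ω * g ω ∂ν) - (∫ ω, fN ω * gN ω ∂ν)|
        + |(∫ ω, fN ω * gN ω ∂ν) - (∫ ω, f ω ∂ν) * (∫ ω, g ω ∂ν)| := abs_sub_le _ _ _
    _ ≤ 2 / N + (|(∫ ω, fN ω * gN ω ∂ν) - (∫ ω, fN ω ∂ν) * (∫ ω, gN ω ∂ν)|
        + |(∫ ω, fN ω ∂ν) * (∫ ω, gN ω ∂ν) - (∫ ω, f ω ∂ν) * (∫ ω, g ω ∂ν)|) :=
          add_le_add herr1 (abs_sub_le _ _ _)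
    _ ≤ 2 / N + (a + 2 / N) := add_le_add le_rfl (add_le_add hkey herr2)
    _ ≤ a + ε := by linarith

/-- If `ν` is strongly mixing with coefficients `α(n)` on `ℝ^ℤ` and `(μ_ω)` is an
equivariant measurable kernel to probabilities on `(0,1)^ℤ` such that `ω ↦ μ_ω(A)` is
past-measurable for past-measurable `A` (and future-measurable for future ones), with
the fibers independent across past and future coordinates, then the mixture measure
`μ = ν.bind κ` satisfies `|μ(A ∩ B) − μ(A)μ(B)| ≤ 4 α(n)` for `A` past-measurable and
`B` measurable w.r.t. coordinates `≥ n`. -/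
theorem mixture_strong_mixing_bound
    (ν : Measure (ℤ → ℝ)) [IsProbabilityMeasure ν]
    (α : ℕ → ℝ)
    (hα : ∀ (n : ℕ) (A B : Set (ℤ → ℝ)),
      MeasurableSet[pastCoords ℝ] A → MeasurableSet[futureCoords ℝ n] B →
      |(ν (A ∩ B)).toReal - (ν A).toReal * (ν B).toReal| ≤ α n)
    (κ : (ℤ → ℝ) → Measure (ℤ → Set.Ioo (0:ℝ) 1))
    (hprob : ∀ ω, IsProbabilityMeasure (κ ω))
    (hmeaspast : ∀ A : Set (ℤ → Set.Ioo (0:ℝ) 1),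
      MeasurableSet[pastCoords (Set.Ioo (0:ℝ) 1)] A →
      Measurable[pastCoords ℝ] (fun ω => (κ ω A).toReal))
    (hmeasfut : ∀ (n : ℕ) (B : Set (ℤ → Set.Ioo (0:ℝ) 1)),
      MeasurableSet[futureCoords (Set.Ioo (0:ℝ) 1) n] B →
      Measurable[futureCoords ℝ n] (fun ω => (κ ω B).toReal))
    (hindep : ∀ (n : ℕ) (ω : ℤ → ℝ) (A B : Set (ℤ → Set.Ioo (0:ℝ) 1)),
      MeasurableSet[pastCoords (Set.Ioo (0:ℝ) 1)] A →
      MeasurableSet[futureCoords (Set.Ioo (0:ℝ) 1) n] B →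
      κ ω (A ∩ B) = κ ω A * κ ω B) :
    ∀ (n : ℕ) (A B : Set (ℤ → Set.Ioo (0:ℝ) 1)),
      MeasurableSet[pastCoords (Set.Ioo (0:ℝ) 1)] A →
      MeasurableSet[futureCoords (Set.Ioo (0:ℝ) 1) n] B →
      |((ν.bind κ) (A ∩ B)).toReal - ((ν.bind κ) A).toReal * ((ν.bind κ) B).toReal| ≤
        4 * α n := by
  intro n A B hA hB
  have ha0 : 0 ≤ α n := by
    have := hα n ∅ ∅ (@MeasurableSet.empty _ (pastCoords ℝ))
      (@MeasurableSet.empty _ (futureCoords ℝ n))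
    simpa using this
  -- sub-σ-algebras are coarser than ambient
  have hpast_le : ∀ (β : Type) [MeasurableSpace β],
      pastCoords β ≤ (inferInstance : MeasurableSpace (ℤ → β)) := by
    intro β _
    exact Measurable.comap_le
      (measurable_pi_lambda _ fun i => measurable_pi_apply _)
  have hfut_le : ∀ (β : Type) [MeasurableSpace β],
      futureCoords β n ≤ (inferInstance : MeasurableSpace (ℤ → β)) := by
    intro β _
    exact Measurable.comap_le
      (measurable_pi_lambda _ fun i => measurable_pi_apply _)
  have hA' : MeasurableSet A := hpast_le _ A hA
  have hB' : MeasurableSet B := hfut_le _ B hB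
  by_cases hκ : AEMeasurable κ ν
  · -- measurable case
    set f : (ℤ → ℝ) → ℝ := fun ω => (κ ω A).toReal with hfdef
    set g : (ℤ → ℝ) → ℝ := fun ω => (κ ω B).toReal with hgdef
    have hbind : ∀ (S : Set (ℤ → Set.Ioo (0:ℝ) 1)), MeasurableSet S →
        ((ν.bind κ) S).toReal = ∫ ω, (κ ω S).toReal ∂ν := by
      intro S hS
      have hb : (ν.bind κ) S = ∫⁻ ω, κ ω S ∂ν := by
        rw [Measure.bind, Measure.join_apply hS,
          lintegral_map' (Measure.measurable_coe hS).aemeasurable hκ]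
      have hκ' : AEMeasurable (fun ω => κ ω S) ν :=
        (Measure.measurable_coe hS).comp_aemeasurable hκ
      have hfin : ∀ᵐ ω ∂ν, κ ω S < ⊤ := by
        filter_upwards with ω
        haveI := hprob ω
        exact lt_of_le_of_lt prob_le_one ENNReal.one_lt_top
      rw [hb]
      exact (integral_toReal hκ' hfin).symm
    rw [hbind _ (hA'.inter hB'), hbind _ hA', hbind _ hB']
    have hfg : ∀ ω, (κ ω (A ∩ B)).toReal = f ω * g ω := fun ω => by
      rw [hindep n ω A B hA hB, ENNReal.toReal_mul]
    rw [integral_congr_ae (Filter.Eventually.of_forall hfg)]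
    have hbound1 : ∀ (S : Set (ℤ → Set.Ioo (0:ℝ) 1)) (ω : ℤ → ℝ),
        (κ ω S).toReal ≤ 1 := by
      intro S ω
      haveI := hprob ω
      calc (κ ω S).toReal ≤ (1 : ENNReal).toReal :=
        ENNReal.toReal_mono ENNReal.one_ne_top prob_le_one
        _ = 1 := by simp
    have hfmeas : Measurable f := (hmeaspast A hA).mono (hpast_le ℝ) le_rfl
    have hgmeas : Measurable g := (hmeasfut n B hB).mono (hfut_le ℝ) le_rfl
    have hcov : ∀ c d : ℝ,
        |(ν (f ⁻¹' Set.Ici c ∩ g ⁻¹' Set.Ici d)).toReal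
          - (ν (f ⁻¹' Set.Ici c)).toReal * (ν (g ⁻¹' Set.Ici d)).toReal| ≤ α n := by
      intro c d
      exact hα n _ _ ((hmeaspast A hA) measurableSet_Ici)
        ((hmeasfut n B hB) measurableSet_Ici)
    calc |(∫ ω, f ω * g ω ∂ν) - (∫ ω, f ω ∂ν) * (∫ ω, g ω ∂ν)|
        ≤ α n := cov_bound ν hfmeas hgmeas hcov
          (fun ω => ENNReal.toReal_nonneg) (fun ω => hbound1 A ω)
          (fun ω => ENNReal.toReal_nonneg) (fun ω => hbound1 B ω)
      _ ≤ 4 * α n := by linarith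
  · -- non-measurable case: bind is the zero measure
    have hzero : ν.bind κ = 0 := by
      rw [Measure.bind, Measure.map_of_not_aemeasurable hκ]
      simp
    rw [hzero]
    simp [ha0]
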